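/- arXiv:2309.04023 — 4 statements merged into one kernel-verified Lean document; each statement's English description precedes it below -/
import Mathlib

section
/- Let δ, γ, V be positive reals, v_max ≥ 0 and D ≥ 0 reals, and let Q : ℕ → ℝ be a sequence with Q 0 = 0 that evolves according to Q (k+1) = max (Q k − c k) 0 + A k for every k, where the per-step drain satisfies c k ≥ 0, the per-step arrival satisfies 0 ≤ A k ≤ D, and A k = 0 whenever Q k > V·(v_max + γ·δ) (the idle rule of BOLA360). Then for every k, Q k ≤ V·(v_max + γ·δ) + D. -/
/-- Deterministic core of Theorem 1 (buffer bound of BOLA360): under the buffer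
evolution with bounded arrivals and the idle rule, the buffer level never
exceeds `V*(v_max + γ*δ) + D`. -/
theorem bola360_buffer_bound
    (δ γ V v_max D : ℝ) (hδ : 0 < δ) (hγ : 0 < γ) (hV : 0 < V)
    (hv : 0 ≤ v_max) (hD : 0 ≤ D)
    (Q c A : ℕ → ℝ) (hQ0 : Q 0 = 0)
    (hev : ∀ k, Q (k + 1) = max (Q k - c k) 0 + A k)
    (hc : ∀ k, 0 ≤ c k)
    (hA0 : ∀ k, 0 ≤ A k) (hAD : ∀ k, A k ≤ D)
    (hidle : ∀ k, Q k > V * (v_max + γ * δ) → A k = 0) :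
    ∀ k, Q k ≤ V * (v_max + γ * δ) + D := by
  intro k
  induction k with
  | zero =>
    have : 0 ≤ V * (v_max + γ * δ) :=
      mul_nonneg hV.le (by positivity)
    simp [hQ0]; linarith
  | succ k ih =>
    rw [hev k]
    by_cases h : Q k > V * (v_max + γ * δ)
    · have hA := hidle k h
      have : max (Q k - c k) 0 ≤ V * (v_max + γ * δ) + D := by
        apply max_le
        · have := hc k; linarith
        · have : 0 ≤ V * (v_max + γ * δ) := mul_nonneg hV.le (by positivity)
          linarith
      linarith [this]
    · push_neg at h
      have h1 : max (Q k - c k) 0 ≤ V * (v_max + γ * δ) := by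
        apply max_le
        · have := hc k; linarith
        · exact mul_nonneg hV.le (by positivity)
      have := hAD k
      linarith
end

section
/- Let δ, γ, V be positive reals, v_max ≥ 0 and D ≥ 0 reals, let Q_max be a real with V < (Q_max − D)/(v_max + γ·δ) and v_max + γ·δ > 0, and let Q : ℕ → ℝ be a sequence with Q 0 = 0 satisfying Q (k+1) = max (Q k − c k) 0 + A k for every k, with c k ≥ 0, 0 ≤ A k ≤ D, and A k = 0 whenever Q k > V·(v_max + γ·δ). Then for every k, Q k ≤ Q_max; that is, the buffer capacity constraint is never violated. -/
/-- Consequence of Theorem 1: with the control parameter `V` in the admissible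
range `V < (Q_max - D)/(v_max + γ*δ)`, BOLA360 never violates the buffer
capacity `Q_max`. -/
theorem bola360_buffer_capacity
    (δ γ V v_max D Q_max : ℝ) (hδ : 0 < δ) (hγ : 0 < γ) (hV : 0 < V)
    (hv : 0 ≤ v_max) (hD : 0 ≤ D)
    (hden : 0 < v_max + γ * δ)
    (hVQ : V < (Q_max - D) / (v_max + γ * δ))
    (Q c A : ℕ → ℝ) (hQ0 : Q 0 = 0)
    (hev : ∀ k, Q (k + 1) = max (Q k - c k) 0 + A k)
    (hc : ∀ k, 0 ≤ c k)
    (hA0 : ∀ k, 0 ≤ A k) (hAD : ∀ k, A k ≤ D)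
    (hidle : ∀ k, Q k > V * (v_max + γ * δ) → A k = 0) :
    ∀ k, Q k ≤ Q_max := by
  have hbound : V * (v_max + γ * δ) + D < Q_max := by
    have := (lt_div_iff₀ hden).mp hVQ
    linarith
  have key : ∀ k, 0 ≤ Q k ∧ Q k ≤ V * (v_max + γ * δ) + D := by
    intro k
    induction k with
    | zero =>
      constructor
      · simp [hQ0]
      · rw [hQ0]; positivity
    | succ n ih =>
      obtain ⟨h0, hle⟩ := ih
      have hmax : max (Q n - c n) 0 ≤ Q n := by
        apply max_le _ h0; linarith [hc n]
      constructor
      · rw [hev n]; have := le_max_right (Q n - c n) (0:ℝ); linarith [hA0 n]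
      · rw [hev n]
        by_cases h : Q n > V * (v_max + γ * δ)
        · rw [hidle n h]; linarith
        · push_neg at h
          linarith [hAD n]
  intro k
  linarith [(key k).2]
end

section
/- Let δ, γ, V be positive reals, let D, M be positive naturals, let p : Fin D → ℝ satisfy 0 ≤ p d ≤ 1 for all d, let v : Fin M → ℝ satisfy v m ≤ v_max for all m (with v_max ≥ 0), let S : Fin M → ℝ satisfy S m > 0 for all m, and suppose the buffer level Q satisfies Q > V·(v_max + γ·δ). Then for every tile d and bitrate m, (V·(v m · p d + γ·δ) − Q)/S m < 0; consequently every decision vector a : Fin D → Fin M → {0,1} that downloads at least one segment has η(a) = Σ_{d,m} a d m·(V(v m·p d + γδ) − Q)/S m < 0, while the all-zero decision vector has η = 0, so the unique optimal action is to download nothing. -/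
open Finset

/-- Idle-state property of BOLA360: when the buffer level exceeds
`V·(v_max + γ·δ)`, every per-term index is negative, every decision vector
downloading at least one segment has strictly negative objective, and the
all-zero decision vector attains objective `0`, so the unique optimal action
is to download nothing. -/
theorem bola360_idle_state
    (δ γ V v_max : ℝ) (hδ : 0 < δ) (hγ : 0 < γ) (hV : 0 < V) (hvmax : 0 ≤ v_max)
    (D M : ℕ) (hD : 0 < D) (hM : 0 < M)
    (p : Fin D → ℝ) (hp : ∀ d, 0 ≤ p d ∧ p d ≤ 1)
    (v : Fin M → ℝ) (hv : ∀ m, v m ≤ v_max)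
    (S : Fin M → ℝ) (hS : ∀ m, 0 < S m)
    (Q : ℝ) (hQ : Q > V * (v_max + γ * δ)) :
    (∀ d m, (V * (v m * p d + γ * δ) - Q) / S m < 0) ∧
    (∀ a : Fin D → Fin M → ℝ, (∀ d m, a d m = 0 ∨ a d m = 1) →
      (∃ d m, a d m = 1) →
      ∑ d, ∑ m, a d m * ((V * (v m * p d + γ * δ) - Q) / S m) < 0) ∧
    (∑ d : Fin D, ∑ m : Fin M,
      (0 : ℝ) * ((V * (v m * p d + γ * δ) - Q) / S m) = 0) := by
  have hterm : ∀ d m, (V * (v m * p d + γ * δ) - Q) / S m < 0 := by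
    intro d m
    apply div_neg_of_neg_of_pos _ (hS m)
    have hpd := hp d
    have hvm := hv m
    nlinarith [mul_nonneg (sub_nonneg.2 hvm) hpd.1, mul_nonneg hvmax (sub_nonneg.2 hpd.2),
      mul_pos hγ hδ]
  refine ⟨hterm, ?_, by simp⟩
  rintro a ha ⟨d₀, m₀, hdm⟩
  have hle : ∀ d m, a d m * ((V * (v m * p d + γ * δ) - Q) / S m) ≤ 0 := by
    intro d m
    rcases ha d m with h | h
    · simp [h]
    · rw [h, one_mul]; exact (hterm d m).le
  have hinner_le : ∀ d ∈ (Finset.univ : Finset (Fin D)),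
      ∑ m, a d m * ((V * (v m * p d + γ * δ) - Q) / S m) ≤ (0 : ℝ) := by
    intro d _
    exact Finset.sum_nonpos (fun m _ => hle d m)
  have hinner_lt : ∑ m, a d₀ m * ((V * (v m * p d₀ + γ * δ) - Q) / S m) < 0 := by
    have h := Finset.sum_lt_sum (g := fun _ : Fin M => (0 : ℝ))
      (fun m _ => hle d₀ m)
      ⟨m₀, Finset.mem_univ m₀, by rw [hdm, one_mul]; exact hterm d₀ m₀⟩
    simpa using h
  have h := Finset.sum_lt_sum (g := fun _ : Fin D => (0 : ℝ)) hinner_le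
    ⟨d₀, Finset.mem_univ d₀, hinner_lt⟩
  simpa using h
end

section
/- Let V, γ, δ be positive reals, p ≥ 0 a real, M a positive natural, v : Fin M → ℝ, and S : Fin M → ℝ strictly increasing with S m > 0 for all m. For a buffer level Q define f_Q(m) = (V·(v m · p + γ·δ) − Q)/S m. Then f_Q satisfies the single-crossing property in Q: for bitrates m' < m, the difference f_Q(m) − f_Q(m') is nondecreasing in Q. Consequently, if Q₁ ≤ Q₂, m₁ maximizes f_{Q₁} over Fin M, m₂ maximizes f_{Q₂} over Fin M, and m₂ < m₁, then m₁ also maximizes f_{Q₂} and m₂ also maximizes f_{Q₁}; in particular the largest maximizing bitrate index is nondecreasing in the buffer level Q. -/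
/-- Single-crossing property of the BOLA360 per-tile index
`f_Q(m) = (V·(v m·p + γ·δ) − Q)/S m` in the buffer level `Q`: for `m' < m`
the difference `f_Q m − f_Q m'` is nondecreasing in `Q`; consequently if
`Q₁ ≤ Q₂`, `m₁` maximizes `f_{Q₁}`, `m₂` maximizes `f_{Q₂}` and `m₂ < m₁`,
then `m₁` also maximizes `f_{Q₂}` and `m₂` also maximizes `f_{Q₁}` (so the
largest maximizing bitrate is nondecreasing in the buffer level). -/
theorem bola360_single_crossing
    (V γ δ p : ℝ) (hV : 0 < V) (hγ : 0 < γ) (hδ : 0 < δ) (hp : 0 ≤ p)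
    (M : ℕ) (hM : 0 < M) (v : Fin M → ℝ) (S : Fin M → ℝ)
    (hSmono : StrictMono S) (hSpos : ∀ m, 0 < S m) :
    (∀ m' m : Fin M, m' < m →
      Monotone (fun Q : ℝ =>
        (V * (v m * p + γ * δ) - Q) / S m -
          (V * (v m' * p + γ * δ) - Q) / S m')) ∧
    (∀ Q₁ Q₂ : ℝ, Q₁ ≤ Q₂ → ∀ m₁ m₂ : Fin M,
      (∀ m, (V * (v m * p + γ * δ) - Q₁) / S m ≤
        (V * (v m₁ * p + γ * δ) - Q₁) / S m₁) →
      (∀ m, (V * (v m * p + γ * δ) - Q₂) / S m ≤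
        (V * (v m₂ * p + γ * δ) - Q₂) / S m₂) →
      m₂ < m₁ →
      ((∀ m, (V * (v m * p + γ * δ) - Q₂) / S m ≤
          (V * (v m₁ * p + γ * δ) - Q₂) / S m₁) ∧
       (∀ m, (V * (v m * p + γ * δ) - Q₁) / S m ≤
          (V * (v m₂ * p + γ * δ) - Q₁) / S m₂))) := by

  have mono : ∀ m' m : Fin M, m' < m →
      Monotone (fun Q : ℝ =>
        (V * (v m * p + γ * δ) - Q) / S m -
          (V * (v m' * p + γ * δ) - Q) / S m') := by
    intro m' m hlt Q₁ Q₂ hQ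
    have h1 : 0 < S m' := hSpos m'
    have h2 : 0 < S m := hSpos m
    have h3 : S m' < S m := hSmono hlt
    have key : ∀ Q : ℝ, (V * (v m * p + γ * δ) - Q) / S m -
        (V * (v m' * p + γ * δ) - Q) / S m' =
        (V * (v m * p + γ * δ)) / S m - (V * (v m' * p + γ * δ)) / S m' +
          Q * (1 / S m' - 1 / S m) := by
      intro Q; field_simp; ring
    simp only [key]
    have hc : 0 ≤ 1 / S m' - 1 / S m := by
      have := one_div_le_one_div_of_le h1 h3.le
      linarith
    have := mul_le_mul_of_nonneg_right hQ hc
    linarith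
  refine ⟨mono, ?_⟩
  intro Q₁ Q₂ hQ m₁ m₂ opt1 opt2 hlt
  have hm := mono m₂ m₁ hlt hQ
  simp only at hm
  have h12 := opt1 m₂
  have h21 := opt2 m₁
  exact ⟨fun m => by have := opt2 m; linarith,
         fun m => by have := opt1 m; linarith⟩
end
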